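/- Let f : Δ_K → ℝ be a piecewise-linear convex function with minimizer set Δ_K^* = argmin f. Then g* = inf_{α ∈ Δ_K \ Δ_K^*} max_{α* ∈ Δ_K^*} (f(α) − f(α*))/‖α − α*‖ is strictly positive. -/

import Mathlib

def simplexSet (K : ℕ) : Set (EuclideanSpace ℝ (Fin K)) :=
  {a | (∀ k, 0 ≤ a k) ∧ ∑ k, a k = 1}

open Finset

lemma vertexBound {E : Type*} [NormedAddCommGroup E] [NormedSpace ℝ E]
    (V : Finset E) (hV : V.Nonempty) (L : E →ₗ[ℝ] ℝ) :
    ∃ C, 0 < C ∧ ∀ x ∈ convexHull ℝ (V : Set E),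
      V.inf' hV (fun v => L v) ≤ L x ∧
      ∃ y ∈ convexHull ℝ (V : Set E), L y = V.inf' hV (fun v => L v) ∧
        ‖x - y‖ ≤ C * (L x - V.inf' hV (fun v => L v)) := by
  set μ := V.inf' hV (fun v => L v) with hμ
  obtain ⟨v₀, hv₀V, hv₀⟩ := Finset.exists_mem_eq_inf' hV (fun v => L v)
  set R : ℝ := 1 + V.sup' hV (fun v => ‖v‖) with hRdef
  have hRv : ∀ v ∈ V, ‖v‖ ≤ R := by
    intro v hv
    have := Finset.le_sup' (fun v => ‖v‖) hv
    simp only [hRdef]; linarith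
  have hR0 : 0 < R := by
    have h0 : (0:ℝ) ≤ ‖v₀‖ := norm_nonneg _
    have := Finset.le_sup' (fun v => ‖v‖) hv₀V
    rw [hRdef]; linarith
  have hball : convexHull ℝ (V : Set E) ⊆ Metric.closedBall 0 R := by
    apply convexHull_min _ (convex_closedBall 0 R)
    intro v hv
    simpa [Metric.mem_closedBall] using hRv v hv
  set V₁ := V.filter (fun v => ¬ (L v = μ)) with hV₁def
  have hδpos : ∀ v ∈ V₁, 0 < L v - μ := by
    intro v hv
    rw [hV₁def, Finset.mem_filter] at hv
    have : μ ≤ L v := Finset.inf'_le (fun v => L v) hv.1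
    rcases lt_or_eq_of_le this with h | h
    · linarith
    · exact absurd h.symm hv.2
  set δ : ℝ := if h : V₁.Nonempty then V₁.inf' h (fun v => L v - μ) else 1 with hδdef
  have hδ0 : 0 < δ := by
    rw [hδdef]
    split_ifs with h
    · obtain ⟨v, hv, hveq⟩ := Finset.exists_mem_eq_inf' h (fun v => L v - μ)
      rw [hveq]; exact hδpos v hv
    · norm_num
  have hδle : ∀ v ∈ V₁, δ ≤ L v - μ := by
    intro v hv
    rw [hδdef, dif_pos ⟨v, hv⟩]
    exact Finset.inf'_le _ hv
  refine ⟨2 * R / δ, by positivity, ?_⟩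
  intro x hx
  obtain ⟨θ, hθ0, hθ1, hθx⟩ := Finset.mem_convexHull'.1 hx
  have hLx : L x = ∑ v ∈ V, θ v * L v := by
    rw [← hθx, map_sum]
    simp [smul_eq_mul]
  have hμx : μ ≤ L x := by
    rw [hLx]
    calc μ = ∑ v ∈ V, θ v * μ := by rw [← Finset.sum_mul, hθ1, one_mul]
    _ ≤ ∑ v ∈ V, θ v * L v := by
        apply Finset.sum_le_sum
        intro v hv
        exact mul_le_mul_of_nonneg_left (Finset.inf'_le (fun v => L v) hv) (hθ0 v hv)
  refine ⟨hμx, ?_⟩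
  set w : ℝ := ∑ v ∈ V.filter (fun v => L v = μ), θ v with hwdef
  have hsplit : w + ∑ v ∈ V₁, θ v = 1 := by
    rw [hwdef, hV₁def, Finset.sum_filter_add_sum_filter_not, hθ1]
  have h1w : ∑ v ∈ V₁, θ v = 1 - w := by linarith
  have hw0 : 0 ≤ w := Finset.sum_nonneg fun v hv => hθ0 v (Finset.mem_filter.1 hv).1
  have h1w0 : 0 ≤ 1 - w := by
    rw [← h1w]
    exact Finset.sum_nonneg fun v hv => hθ0 v (Finset.mem_filter.1 hv).1
  have hkey : δ * (1 - w) ≤ L x - μ := by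
    have hsum : ∑ v ∈ V, θ v * (L v - μ) = ∑ v ∈ V, θ v * L v - μ := by
      simp only [mul_sub]
      rw [Finset.sum_sub_distrib, ← Finset.sum_mul, hθ1, one_mul]
    have hsplit2 : ∑ v ∈ V, θ v * (L v - μ)
        = ∑ v ∈ V.filter (fun v => L v = μ), θ v * (L v - μ)
          + ∑ v ∈ V₁, θ v * (L v - μ) := by
      rw [hV₁def, Finset.sum_filter_add_sum_filter_not]
    have hzero : ∑ v ∈ V.filter (fun v => L v = μ), θ v * (L v - μ) = 0 := by
      apply Finset.sum_eq_zero
      intro v hv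
      rw [(Finset.mem_filter.1 hv).2]
      ring
    have hlow : δ * (1 - w) ≤ ∑ v ∈ V₁, θ v * (L v - μ) := by
      rw [← h1w, Finset.mul_sum]
      apply Finset.sum_le_sum
      intro v hv
      rw [mul_comm]
      exact mul_le_mul_of_nonneg_left (hδle v hv) (hθ0 v (Finset.mem_filter.1 hv).1)
    rw [hLx]
    calc δ * (1 - w) ≤ ∑ v ∈ V₁, θ v * (L v - μ) := hlow
    _ = ∑ v ∈ V, θ v * (L v - μ) := by rw [hsplit2, hzero, zero_add]
    _ = ∑ v ∈ V, θ v * L v - μ := hsum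
  -- construct y and prove ‖x - y‖ ≤ 2R(1-w)
  have main : ∃ y ∈ convexHull ℝ (V : Set E), L y = μ ∧ ‖x - y‖ ≤ 2 * R * (1 - w) := by
    by_cases hw : 0 < w
    · set V₀ := V.filter (fun v => L v = μ) with hV₀def
      set y := V₀.centerMass θ id with hydef
      have hyhull : y ∈ convexHull ℝ (V : Set E) := by
        apply Finset.centerMass_mem_convexHull V₀
          (fun v hv => hθ0 v (Finset.mem_filter.1 hv).1) hw
        intro v hv
        exact (Finset.mem_filter.1 hv).1
      have hwne : w ≠ 0 := ne_of_gt hw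
      have hysum : w • y = ∑ v ∈ V₀, θ v • v := by
        rw [hydef, Finset.centerMass, smul_smul]
        rw [mul_inv_cancel₀ hwne, one_smul]
        simp
      have hLy : L y = μ := by
        have : w * L y = w * μ := by
          have := congrArg L hysum
          rw [map_smul, map_sum] at this
          simp only [map_smul, smul_eq_mul] at this
          rw [this]
          calc ∑ v ∈ V₀, θ v * L v = ∑ v ∈ V₀, θ v * μ := by
                apply Finset.sum_congr rfl
                intro v hv
                rw [(Finset.mem_filter.1 hv).2]
          _ = w * μ := by rw [← Finset.sum_mul]
        exact mul_left_cancel₀ hwne this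
      have hyR : ‖y‖ ≤ R := by
        have := hball hyhull
        simpa [Metric.mem_closedBall] using this
      have hxy : x - y = (∑ v ∈ V₁, θ v • v) - (1 - w) • y := by
        have : x = (∑ v ∈ V₀, θ v • v) + ∑ v ∈ V₁, θ v • v := by
          rw [← hθx, hV₀def, hV₁def, Finset.sum_filter_add_sum_filter_not]
        rw [this, ← hysum]
        module
      have hnorm : ‖x - y‖ ≤ 2 * R * (1 - w) := by
        rw [hxy]
        calc ‖(∑ v ∈ V₁, θ v • v) - (1 - w) • y‖
            ≤ ‖∑ v ∈ V₁, θ v • v‖ + ‖(1 - w) • y‖ := norm_sub_le _ _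
        _ ≤ (∑ v ∈ V₁, θ v * R) + (1 - w) * R := by
            gcongr
            · calc ‖∑ v ∈ V₁, θ v • v‖ ≤ ∑ v ∈ V₁, ‖θ v • v‖ := norm_sum_le _ _
              _ ≤ ∑ v ∈ V₁, θ v * R := by
                  apply Finset.sum_le_sum
                  intro v hv
                  rw [norm_smul, Real.norm_eq_abs,
                    abs_of_nonneg (hθ0 v (Finset.mem_filter.1 hv).1)]
                  exact mul_le_mul_of_nonneg_left (hRv v (Finset.mem_filter.1 hv).1)
                    (hθ0 v (Finset.mem_filter.1 hv).1)
            · rw [norm_smul, Real.norm_eq_abs, abs_of_nonneg h1w0]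
              exact mul_le_mul_of_nonneg_left hyR h1w0
        _ = (1 - w) * R + (1 - w) * R := by rw [← Finset.sum_mul, h1w]
        _ = 2 * R * (1 - w) := by ring
      exact ⟨y, hyhull, hLy, hnorm⟩
    · have hw0' : w = 0 := le_antisymm (not_lt.1 hw) hw0
      refine ⟨v₀, subset_convexHull ℝ (V : Set E) hv₀V, hv₀.symm, ?_⟩
      have hxR : ‖x‖ ≤ R := by
        have := hball hx
        simpa [Metric.mem_closedBall] using this
      have hv₀R : ‖v₀‖ ≤ R := hRv v₀ hv₀V
      calc ‖x - v₀‖ ≤ ‖x‖ + ‖v₀‖ := norm_sub_le _ _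
      _ ≤ 2 * R * (1 - w) := by rw [hw0']; linarith
  obtain ⟨y, hyh, hLy, hny⟩ := main
  refine ⟨y, hyh, hLy, ?_⟩
  calc ‖x - y‖ ≤ 2 * R * (1 - w) := hny
  _ = 2 * R / δ * (δ * (1 - w)) := by field_simp
  _ ≤ 2 * R / δ * (L x - μ) := by
      apply mul_le_mul_of_nonneg_left hkey
      positivity

lemma finiteExtremePoints {E : Type*} [NormedAddCommGroup E] [NormedSpace ℝ E]
    {ι : Type*} [Fintype ι] (a : ι → E →ₗ[ℝ] ℝ) (cc : ι → ℝ) :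
    (Set.extremePoints ℝ {x : E | ∀ i, a i x ≤ cc i}).Finite := by
  set P := {x : E | ∀ i, a i x ≤ cc i} with hPdef
  have hinj : Set.InjOn (fun x => {i | a i x = cc i}) (Set.extremePoints ℝ P) := by
    intro x hx y hy hxy
    by_contra hne
    have hA : ∀ i, a i x = cc i ↔ a i y = cc i := by
      intro i
      exact Set.ext_iff.1 hxy i
    have hxP : x ∈ P := hx.1
    have hyP : y ∈ P := hy.1
    -- pick a small positive t
    set F : Finset ℝ := insert 1 ((Finset.univ.filter (fun i => a i y < a i x)).image
      (fun i => (cc i - a i x) / (a i x - a i y))) with hFdef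
    have hFne : F.Nonempty := ⟨1, Finset.mem_insert_self _ _⟩
    set t : ℝ := F.min' hFne with htdef
    have hFpos : ∀ r ∈ F, 0 < r := by
      intro r hr
      rw [hFdef] at hr
      rcases Finset.mem_insert.1 hr with h | h
      · rw [h]; norm_num
      · obtain ⟨i, hi, rfl⟩ := Finset.mem_image.1 h
        have hlt : a i y < a i x := (Finset.mem_filter.1 hi).2
        have hxlt : a i x < cc i := by
          rcases lt_or_eq_of_le (hxP i) with h' | h'
          · exact h'
          · exact absurd ((hA i).1 h') (by rw [← h']; exact ne_of_lt hlt)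
        exact div_pos (by linarith) (by linarith)
    have ht0 : 0 < t := hFpos _ (F.min'_mem hFne)
    set z : E := x + t • (x - y) with hzdef
    have haz : ∀ i, a i z = a i x + t * (a i x - a i y) := by
      intro i
      simp only [hzdef, map_add, map_smul, map_sub, smul_eq_mul]
      try ring
    have hzP : z ∈ P := by
      intro i
      rw [haz i]
      rcases le_or_gt (a i x) (a i y) with h | h
      · have : t * (a i x - a i y) ≤ 0 := mul_nonpos_of_nonneg_of_nonpos ht0.le (by linarith)
        have := hxP i
        linarith
      · have hmem : (cc i - a i x) / (a i x - a i y) ∈ F := by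
          rw [hFdef]
          exact Finset.mem_insert_of_mem (Finset.mem_image.2
            ⟨i, Finset.mem_filter.2 ⟨Finset.mem_univ i, h⟩, rfl⟩)
        have hle : t ≤ (cc i - a i x) / (a i x - a i y) := Finset.min'_le _ _ hmem
        have := (le_div_iff₀ (by linarith : (0:ℝ) < a i x - a i y)).1 hle
        linarith
    have hseg : x ∈ openSegment ℝ z y := by
      refine ⟨1 / (1 + t), t / (1 + t), by positivity, by positivity, by field_simp, ?_⟩
      rw [hzdef]
      match_scalars <;> field_simp <;> ring
    have := hx.2 hyP hzP (by rw [openSegment_symm]; exact hseg)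
    exact hne this.symm
  exact Set.Finite.of_finite_image (Set.toFinite _) hinj

lemma polytopeHull {E : Type*} [NormedAddCommGroup E] [NormedSpace ℝ E]
    {ι : Type*} [Fintype ι] (a : ι → E →ₗ[ℝ] ℝ) (cc : ι → ℝ)
    (hcomp : IsCompact {x : E | ∀ i, a i x ≤ cc i}) :
    {x : E | ∀ i, a i x ≤ cc i}
      = convexHull ℝ (Set.extremePoints ℝ {x : E | ∀ i, a i x ≤ cc i}) := by
  set P := {x : E | ∀ i, a i x ≤ cc i} with hPdef
  have hconv : Convex ℝ P := by
    have : P = ⋂ i, {x : E | a i x ≤ cc i} := by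
      ext x; simp [hPdef, Set.mem_iInter]
    rw [this]
    exact convex_iInter fun i => convex_halfSpace_le (a i).isLinear _
  have h1 := closure_convexHull_extremePoints hcomp hconv
  have h2 : IsClosed (convexHull ℝ (Set.extremePoints ℝ P)) :=
    (finiteExtremePoints a cc).isClosed_convexHull ℝ
  calc P = closure (convexHull ℝ (Set.extremePoints ℝ P)) := h1.symm
  _ = convexHull ℝ (Set.extremePoints ℝ P) := h2.closure_eq

noncomputable def coordSum {K : ℕ} (cv : EuclideanSpace ℝ (Fin K)) :
    EuclideanSpace ℝ (Fin K) →ₗ[ℝ] ℝ where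
  toFun x := ∑ k, cv k * x k
  map_add' x y := by
    simp [PiLp.add_apply, mul_add, Finset.sum_add_distrib]
  map_smul' r x := by
    simp [PiLp.smul_apply, Finset.mul_sum, smul_eq_mul]
    ring_nf
    simp [mul_comm, mul_left_comm]

lemma coordSum_apply {K : ℕ} (cv x : EuclideanSpace ℝ (Fin K)) :
    coordSum cv x = ∑ k, cv k * x k := rfl

lemma simplex_norm_le {K : ℕ} {x : EuclideanSpace ℝ (Fin K)} (hx : x ∈ simplexSet K) :
    ‖x‖ ≤ 1 := by
  obtain ⟨hx0, hx1⟩ := hx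
  rw [EuclideanSpace.norm_eq]
  have hle1 : ∀ k, x k ≤ 1 := by
    intro k
    rw [← hx1]
    exact Finset.single_le_sum (fun i _ => hx0 i) (Finset.mem_univ k)
  have : ∑ k, ‖x k‖^2 ≤ 1 := by
    calc ∑ k, ‖x k‖^2 ≤ ∑ k, x k := by
          apply Finset.sum_le_sum
          intro k _
          rw [Real.norm_eq_abs, sq_abs]
          nlinarith [hx0 k, hle1 k]
    _ = 1 := hx1
  calc Real.sqrt (∑ k, ‖x k‖^2) ≤ Real.sqrt 1 := Real.sqrt_le_sqrt this
  _ = 1 := Real.sqrt_one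

noncomputable def aMap {K n : ℕ} (c : Fin n → EuclideanSpace ℝ (Fin K)) (j : Fin n) :
    (Fin K ⊕ Bool ⊕ Fin n) → (EuclideanSpace ℝ (Fin K) →ₗ[ℝ] ℝ) :=
  Sum.elim (fun k => coordSum (WithLp.toLp 2 (fun k' => if k' = k then (-1:ℝ) else 0)))
    (Sum.elim (fun s => if s then coordSum (WithLp.toLp 2 (fun _ => (1:ℝ))) else coordSum (WithLp.toLp 2 (fun _ => (-1:ℝ))))
      (fun i => coordSum (WithLp.toLp 2 (fun k => c i k - c j k))))

def cMap {K n : ℕ} (b : Fin n → ℝ) (j : Fin n) : (Fin K ⊕ Bool ⊕ Fin n) → ℝ :=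
  Sum.elim (fun _ => 0) (Sum.elim (fun s => if s then 1 else -1) (fun i => b j - b i))

lemma poly_eq {K n : ℕ} (c : Fin n → EuclideanSpace ℝ (Fin K)) (b : Fin n → ℝ) (j : Fin n) :
    {x : EuclideanSpace ℝ (Fin K) | ∀ t, aMap c j t x ≤ cMap (K := K) b j t}
      = simplexSet K ∩ {x | ∀ i, ∑ k, c i k * x k + b i ≤ ∑ k, c j k * x k + b j} := by
  have e1 : ∀ (k : Fin K) (x : EuclideanSpace ℝ (Fin K)),
      aMap c j (Sum.inl k) x = - x k := by
    intro k x
    simp [aMap, coordSum_apply, PiLp.toLp_apply, ite_mul, Finset.sum_ite_eq']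
  have e2 : ∀ (x : EuclideanSpace ℝ (Fin K)),
      aMap c j (Sum.inr (Sum.inl true)) x = ∑ k, x k := by
    intro x
    simp [aMap, coordSum_apply, PiLp.toLp_apply]
  have e3 : ∀ (x : EuclideanSpace ℝ (Fin K)),
      aMap c j (Sum.inr (Sum.inl false)) x = - ∑ k, x k := by
    intro x
    simp [aMap, coordSum_apply, PiLp.toLp_apply]
  have e4 : ∀ (i : Fin n) (x : EuclideanSpace ℝ (Fin K)),
      aMap c j (Sum.inr (Sum.inr i)) x = (∑ k, c i k * x k) - ∑ k, c j k * x k := by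
    intro i x
    simp [aMap, coordSum_apply, PiLp.toLp_apply, sub_mul, Finset.sum_sub_distrib]
  ext x
  simp only [Set.mem_setOf_eq, Set.mem_inter_iff]
  constructor
  · intro h
    have hsum : ∑ k, x k = 1 := by
      have ht := h (Sum.inr (Sum.inl true))
      have hfa := h (Sum.inr (Sum.inl false))
      rw [e2] at ht
      rw [e3] at hfa
      simp [cMap] at ht hfa
      linarith
    refine ⟨⟨fun k => ?_, hsum⟩, fun i => ?_⟩
    · have := h (Sum.inl k)
      rw [e1] at this
      simp [cMap] at this
      linarith
    · have := h (Sum.inr (Sum.inr i))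
      rw [e4] at this
      simp [cMap] at this
      linarith
  · rintro ⟨⟨h0, h1⟩, h2⟩
    intro t
    match t with
    | Sum.inl k => rw [e1]; simp [cMap]; linarith [h0 k]
    | Sum.inr (Sum.inl true) => rw [e2]; simp [cMap, h1]
    | Sum.inr (Sum.inl false) => rw [e3]; simp [cMap, h1]
    | Sum.inr (Sum.inr i) => rw [e4]; simp [cMap]; linarith [h2 i]

lemma poly_compact {K n : ℕ} (c : Fin n → EuclideanSpace ℝ (Fin K)) (b : Fin n → ℝ) (j : Fin n) :
    IsCompact {x : EuclideanSpace ℝ (Fin K) | ∀ t, aMap c j t x ≤ cMap (K := K) b j t} := by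
  apply Metric.isCompact_of_isClosed_isBounded
  · have : {x : EuclideanSpace ℝ (Fin K) | ∀ t, aMap c j t x ≤ cMap (K := K) b j t}
        = ⋂ t, {x | aMap c j t x ≤ cMap (K := K) b j t} := by
      ext x; simp [Set.mem_iInter]
    rw [this]
    exact isClosed_iInter fun t =>
      isClosed_le (aMap c j t).continuous_of_finiteDimensional continuous_const
  · rw [poly_eq]
    apply (Metric.isBounded_closedBall (x := (0 : EuclideanSpace ℝ (Fin K))) (r := 1)).subset
    intro x hx
    simpa [mem_closedBall_zero_iff] using simplex_norm_le hx.1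

lemma simplex_compact {K : ℕ} : IsCompact (simplexSet K) := by
  apply Metric.isCompact_of_isClosed_isBounded
  · have : simplexSet K = (⋂ k, {x : EuclideanSpace ℝ (Fin K) | 0 ≤ x k})
        ∩ {x | ∑ k, x k = 1} := by
      ext x; simp [simplexSet, Set.mem_iInter]
    rw [this]
    refine IsClosed.inter (isClosed_iInter fun k =>
      isClosed_le continuous_const (by fun_prop)) (isClosed_eq ?_ continuous_const)
    exact continuous_finset_sum _ fun k _ => by fun_prop
  · apply (Metric.isBounded_closedBall (x := (0 : EuclideanSpace ℝ (Fin K))) (r := 1)).subset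
    intro x hx
    simpa [mem_closedBall_zero_iff] using simplex_norm_le hx

lemma simplex_nonempty {K : ℕ} (hK : 1 ≤ K) : (simplexSet K).Nonempty := by
  refine ⟨(WithLp.toLp 2 (fun k : Fin K => if k = ⟨0, hK⟩ then (1:ℝ) else 0) : EuclideanSpace ℝ (Fin K)), fun k => ?_, ?_⟩
  · by_cases h : k = ⟨0, hK⟩ <;> simp [h, PiLp.toLp_apply]
  · simp [PiLp.toLp_apply, Finset.sum_ite_eq']

lemma perPiece {K n : ℕ} (hne : (Finset.univ : Finset (Fin n)).Nonempty)
    (c : Fin n → EuclideanSpace ℝ (Fin K)) (b : Fin n → ℝ)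
    (f : EuclideanSpace ℝ (Fin K) → ℝ)
    (hf : ∀ x, f x = Finset.univ.sup' hne (fun i => ∑ k, c i k * x k + b i))
    (xmin : EuclideanSpace ℝ (Fin K)) (hxminΔ : xmin ∈ simplexSet K)
    (hmin : ∀ z ∈ simplexSet K, f xmin ≤ f z) (j : Fin n) :
    ∃ gj : ℝ, 0 < gj ∧ ∀ x ∈ simplexSet K,
      (∀ i, ∑ k, c i k * x k + b i ≤ ∑ k, c j k * x k + b j) →
      ∃ y, (y ∈ simplexSet K ∧ ∀ z ∈ simplexSet K, f y ≤ f z) ∧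
        gj * ‖x - y‖ ≤ f x - f xmin := by
  have hfval : ∀ x, (∀ i, ∑ k, c i k * x k + b i ≤ ∑ k, c j k * x k + b j) →
      f x = ∑ k, c j k * x k + b j := by
    intro x hx
    rw [hf]
    exact le_antisymm (Finset.sup'_le _ _ fun i _ => hx i)
      (Finset.le_sup' (fun i => ∑ k, c i k * x k + b i) (Finset.mem_univ j))
  set P := simplexSet K ∩
    {x | ∀ i, ∑ k, c i k * x k + b i ≤ ∑ k, c j k * x k + b j} with hPdef
  by_cases hPne : P.Nonempty
  · have hfin := finiteExtremePoints (aMap c j) (cMap (K := K) b j)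
    set V := hfin.toFinset with hVdef
    have hPhull : P = convexHull ℝ (V : Set (EuclideanSpace ℝ (Fin K))) := by
      rw [hPdef, ← poly_eq c b j, hfin.coe_toFinset]
      exact polytopeHull (aMap c j) (cMap (K := K) b j) (poly_compact c b j)
    have hVne : V.Nonempty := by
      rw [Finset.nonempty_iff_ne_empty]
      intro hV
      obtain ⟨x, hx⟩ := hPne
      rw [hPhull, hV] at hx
      simp at hx
    obtain ⟨C, hC0, hA⟩ := vertexBound V hVne (coordSum (c j))
    set μ := V.inf' hVne (fun v => coordSum (c j) v) with hμdef
    have hfP : ∀ x ∈ P, f x = coordSum (c j) x + b j := by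
      intro x hx
      rw [hfval x hx.2, coordSum_apply]
    -- the minimum of f over P is μ + b j
    obtain ⟨x₀, hx₀⟩ := hPne
    obtain ⟨-, y₀, hy₀h, hLy₀, -⟩ := hA x₀ (hPhull ▸ hx₀)
    have hy₀P : y₀ ∈ P := by rw [hPhull]; exact hy₀h
    have hfy₀ : f y₀ = μ + b j := by rw [hfP y₀ hy₀P, hLy₀]
    have hmle : f xmin ≤ μ + b j := hfy₀ ▸ hmin y₀ hy₀P.1
    by_cases hcase : μ + b j ≤ f xmin
    · -- the piece touches the global minimum
      refine ⟨1 / C, by positivity, ?_⟩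
      intro x hxΔ hxi
      have hxP : x ∈ P := ⟨hxΔ, hxi⟩
      obtain ⟨hμx, y, hyh, hLy, hxy⟩ := hA x (hPhull ▸ hxP)
      have hyP : y ∈ P := by rw [hPhull]; exact hyh
      have hfy : f y = μ + b j := by rw [hfP y hyP, hLy]
      have hfym : f y = f xmin := le_antisymm (hfy ▸ hcase) (hmin y hyP.1)
      refine ⟨y, ⟨hyP.1, fun z hz => hfym ▸ hmin z hz⟩, ?_⟩
      have hd : f x - f xmin = coordSum (c j) x - μ := by
        rw [hfP x hxP, ← hfym, hfy]; ring
      calc 1 / C * ‖x - y‖ ≤ 1 / C * (C * (coordSum (c j) x - μ)) := by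
            apply mul_le_mul_of_nonneg_left hxy (by positivity)
      _ = coordSum (c j) x - μ := by field_simp
      _ = f x - f xmin := hd.symm
    · -- the piece stays above the global minimum
      push_neg at hcase
      refine ⟨(μ + b j - f xmin) / 2, by linarith, ?_⟩
      intro x hxΔ hxi
      have hxP : x ∈ P := ⟨hxΔ, hxi⟩
      obtain ⟨hμx, -⟩ := hA x (hPhull ▸ hxP)
      refine ⟨xmin, ⟨hxminΔ, hmin⟩, ?_⟩
      have h2 : ‖x - xmin‖ ≤ 2 := by
        have h3 := simplex_norm_le hxΔ
        have h4 := simplex_norm_le hxminΔ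
        calc ‖x - xmin‖ ≤ ‖x‖ + ‖xmin‖ := norm_sub_le _ _
        _ ≤ 2 := by linarith
      have hlow : μ + b j - f xmin ≤ f x - f xmin := by
        rw [hfP x hxP]; linarith
      calc (μ + b j - f xmin) / 2 * ‖x - xmin‖
          ≤ (μ + b j - f xmin) / 2 * 2 := by
            apply mul_le_mul_of_nonneg_left h2 (by linarith)
      _ = μ + b j - f xmin := by ring
      _ ≤ f x - f xmin := hlow
  · refine ⟨1, one_pos, ?_⟩
    intro x hxΔ hxi
    exact absurd ⟨x, hxΔ, hxi⟩ hPne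

/-- For a piecewise-linear convex function on the simplex with minimizer set
`S`, the quantity `g* = inf_{α ∉ S} max_{α* ∈ S} (f(α) − f(α*))/‖α − α*‖` is
strictly positive: there is `g > 0` with `g‖α − α*‖ ≤ f(α) − f(α*)` for some
minimizer `α*` depending on `α`. -/
theorem stmt15 {K n : ℕ} (hK : 1 ≤ K)
    (hne : (Finset.univ : Finset (Fin n)).Nonempty)
    (c : Fin n → EuclideanSpace ℝ (Fin K)) (b : Fin n → ℝ)
    (f : EuclideanSpace ℝ (Fin K) → ℝ)
    (hf : ∀ x, f x = Finset.univ.sup' hne (fun i => ∑ k, c i k * x k + b i))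
    (S : Set (EuclideanSpace ℝ (Fin K)))
    (hS : S = simplexSet K ∩ {x | ∀ y ∈ simplexSet K, f x ≤ f y}) :
    ∃ g : ℝ, 0 < g ∧ ∀ α ∈ simplexSet K, α ∉ S →
      ∃ αs ∈ S, g * ‖α - αs‖ ≤ f α - f αs := by
  have hcont : Continuous f := by
    have hpieces : ∀ i : Fin n,
        Continuous (fun x : EuclideanSpace ℝ (Fin K) => ∑ k, c i k * x k + b i) := by
      intro i
      exact (continuous_finset_sum _ fun k _ =>
        continuous_const.mul (by fun_prop)).add continuous_const
    have h := Continuous.finset_sup'_apply hne (fun i _ => hpieces i)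
    have hfe : f = fun x => Finset.univ.sup' hne (fun i => ∑ k, c i k * x k + b i) :=
      funext hf
    rw [hfe]
    exact h
  obtain ⟨xmin, hxminΔ, hminOn⟩ :=
    simplex_compact.exists_isMinOn (simplex_nonempty hK) hcont.continuousOn
  have hmin : ∀ z ∈ simplexSet K, f xmin ≤ f z := fun z hz => hminOn hz
  have hperj := fun j => perPiece hne c b f hf xmin hxminΔ hmin j
  choose gfun hg0 hgp using hperj
  refine ⟨Finset.univ.inf' hne gfun, ?_, ?_⟩
  · rw [Finset.lt_inf'_iff]
    exact fun j _ => hg0 j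
  · intro α hαΔ hαS
    obtain ⟨j, -, hj⟩ := Finset.exists_mem_eq_sup' hne (fun i => ∑ k, c i k * α k + b i)
    have hj' : ∀ i, ∑ k, c i k * α k + b i ≤ ∑ k, c j k * α k + b j := by
      intro i
      rw [← hj]
      exact Finset.le_sup' (fun i => ∑ k, c i k * α k + b i) (Finset.mem_univ i)
    obtain ⟨y, hyS, hy⟩ := hgp j α hαΔ hj'
    have hyS' : y ∈ S := by rw [hS]; exact ⟨hyS.1, hyS.2⟩
    refine ⟨y, hyS', ?_⟩
    have hfy : f y = f xmin := le_antisymm (hyS.2 xmin hxminΔ) (hmin y hyS.1)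
    rw [hfy]
    calc Finset.univ.inf' hne gfun * ‖α - y‖ ≤ gfun j * ‖α - y‖ :=
          mul_le_mul_of_nonneg_right (Finset.inf'_le _ (Finset.mem_univ j)) (norm_nonneg _)
    _ ≤ f α - f xmin := hy
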